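/- Let L ⊂ M_{n×T}(ℂ) be a full-rank lattice of dimension k = 2nT with ‖X‖_F ≥ 1 for all nonzero X ∈ L, and let n_r > nT + 1 be the number of receive antennas. Then the union-bound error estimate of the scheme C_L(ρ) at multiplexing gain r satisfies P_e(ρ) ≤ K ρ^{−(1 − r/n) n_r} for a constant K; in particular any full-dimensional lattice achieves full multiplexing gain r = n when n_r > nT + 1. -/

import Mathlib

open Matrix

/-- The Frobenius norm of a complex matrix. -/
noncomputable def frobNorm {n T : ℕ} (X : Matrix (Fin n) (Fin T) ℂ) : ℝ :=
  Real.sqrt (((X * Xᴴ).trace).re)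

lemma prod_one_add_ge {ι : Type*} (s : Finset ι) (f : ι → ℝ) (hf : ∀ i ∈ s, 0 ≤ f i) :
    1 + ∑ i ∈ s, f i ≤ ∏ i ∈ s, (1 + f i) := by
  induction s using Finset.cons_induction with
  | empty => simp
  | cons a s ha ih =>
    rw [Finset.prod_cons, Finset.sum_cons]
    have h1 : 0 ≤ f a := hf a (Finset.mem_cons_self a s)
    have h2 : ∀ i ∈ s, 0 ≤ f i := fun i hi => hf i (Finset.mem_cons_of_mem hi)
    have h3 := ih h2
    have h4 : 0 ≤ ∑ i ∈ s, f i := Finset.sum_nonneg h2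
    nlinarith

lemma trace_re_eq {n T : ℕ} (X : Matrix (Fin n) (Fin T) ℂ) :
    ((X * Xᴴ).trace).re = ∑ i, ∑ j, Complex.normSq (X i j) := by
  simp only [Matrix.trace, Matrix.diag, Matrix.mul_apply, Matrix.conjTranspose_apply,
    Complex.re_sum]
  congr 1; ext i; congr 1; ext j
  simp only [Complex.star_def, Complex.mul_conj']
  rw [← Complex.ofReal_pow, Complex.ofReal_re, Complex.sq_norm]

lemma trace_re_nonneg {n T : ℕ} (X : Matrix (Fin n) (Fin T) ℂ) :
    0 ≤ ((X * Xᴴ).trace).re := by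
  rw [trace_re_eq X]
  exact Finset.sum_nonneg fun i _ => Finset.sum_nonneg fun j _ => Complex.normSq_nonneg _

lemma frob_sq {n T : ℕ} (X : Matrix (Fin n) (Fin T) ℂ) :
    frobNorm X ^ 2 = ((X * Xᴴ).trace).re := Real.sq_sqrt (trace_re_nonneg X)

lemma det_re_ge {n T : ℕ} (c : ℝ) (hc : 0 ≤ c) (X : Matrix (Fin n) (Fin T) ℂ) :
    1 + c * ((X * Xᴴ).trace).re ≤
      (((1 : Matrix (Fin n) (Fin n) ℂ) + (c : ℂ) • (X * Xᴴ)).det).re := by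
  set A := X * Xᴴ with hAdef
  have hA : A.IsHermitian := isHermitian_mul_conjTranspose_self X
  set U : Matrix (Fin n) (Fin n) ℂ := (hA.eigenvectorUnitary : Matrix (Fin n) (Fin n) ℂ) with hU
  have hUU : U * star U = 1 := (Matrix.mem_unitaryGroup_iff).mp hA.eigenvectorUnitary.2
  set μ := hA.eigenvalues with hμ
  have hμ0 : ∀ i, 0 ≤ μ i := fun i => Matrix.eigenvalues_self_mul_conjTranspose_nonneg X i
  have hspec : A = U * Matrix.diagonal (RCLike.ofReal ∘ μ) * star U := hA.spectral_theorem
  have key : (1 : Matrix (Fin n) (Fin n) ℂ) + (c : ℂ) • A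
      = U * Matrix.diagonal (fun i => 1 + (c : ℂ) * (μ i : ℂ)) * star U := by
    have : Matrix.diagonal (fun i => 1 + (c : ℂ) * (μ i : ℂ))
        = (1 : Matrix (Fin n) (Fin n) ℂ) + (c : ℂ) • Matrix.diagonal (RCLike.ofReal ∘ μ) := by
      rw [← Matrix.diagonal_one, ← Matrix.diagonal_smul, ← Matrix.diagonal_add]
      rfl
    rw [this, Matrix.mul_add, Matrix.add_mul, Matrix.mul_one, hUU, Matrix.mul_smul,
      Matrix.smul_mul, ← hspec]
  have hdet : ((1 : Matrix (Fin n) (Fin n) ℂ) + (c : ℂ) • A).det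
      = ((∏ i, (1 + c * μ i) : ℝ) : ℂ) := by
    rw [key, Matrix.det_mul, Matrix.det_mul, mul_comm (U.det), mul_assoc, ← Matrix.det_mul, hUU,
      Matrix.det_one, mul_one, Matrix.det_diagonal]
    push_cast
    rfl
  have htr : (A.trace).re = ∑ i, μ i := by
    have : A.trace = ((∑ i, μ i : ℝ) : ℂ) := by
      rw [hspec, Matrix.trace_mul_cycle]
      have hUU' : star U * U = 1 := (Matrix.mem_unitaryGroup_iff').mp hA.eigenvectorUnitary.2
      rw [hUU', Matrix.one_mul, Matrix.trace_diagonal]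
      push_cast
      rfl
    rw [this, Complex.ofReal_re]
  rw [hdet, Complex.ofReal_re, htr, Finset.mul_sum]
  exact prod_one_add_ge _ _ fun i _ => mul_nonneg hc (hμ0 i)

def supAbs {d : ℕ} (m : Fin d → ℤ) : ℕ := Finset.univ.sup fun i => (m i).natAbs

lemma le_supAbs {d : ℕ} (m : Fin d → ℤ) (i : Fin d) : (m i).natAbs ≤ supAbs m := by
  unfold supAbs; exact Finset.le_sup (f := fun j => (m j).natAbs) (Finset.mem_univ i)

lemma supAbs_pos {d : ℕ} {m : Fin d → ℤ} (hm : m ≠ 0) : 1 ≤ supAbs m := by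
  rcases Nat.eq_zero_or_pos (supAbs m) with h | h
  · exfalso
    apply hm
    funext i
    have hi := le_supAbs m i
    rw [h, Nat.le_zero] at hi
    simpa [Int.natAbs_eq_zero] using hi
  · exact h

lemma summable_int_vec (d : ℕ) :
    Summable fun m : {m : Fin d → ℤ // m ≠ 0} => (1:ℝ) / (supAbs m.1 : ℝ) ^ (d + 2) := by
  have hsum2 : Summable fun N : ℕ => (1:ℝ) / (N:ℝ) ^ 2 := by
    simpa using Real.summable_one_div_nat_pow.mpr one_lt_two
  apply summable_of_sum_le (c := (3:ℝ) ^ d * ∑' N : ℕ, 1 / (N:ℝ) ^ 2)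
  · intro m; positivity
  · intro u
    rw [← Finset.sum_fiberwise_of_maps_to
      (g := fun m : {m : Fin d → ℤ // m ≠ 0} => supAbs m.1)
      (t := u.image fun m => supAbs m.1) (fun x hx => Finset.mem_image_of_mem _ hx)]
    have inner : ∀ N ∈ u.image (fun m => supAbs m.1),
        ∑ m ∈ u.filter (fun m => supAbs m.1 = N), (1:ℝ) / (supAbs m.1 : ℝ) ^ (d + 2)
          ≤ (3:ℝ) ^ d * (1 / (N:ℝ) ^ 2) := by
      intro N hN
      obtain ⟨m0, hm0u, hm0⟩ := Finset.mem_image.mp hN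
      have hN1 : 1 ≤ N := hm0 ▸ supAbs_pos m0.2
      have hNR : (1:ℝ) ≤ (N:ℝ) := by exact_mod_cast hN1
      have hNpos : (0:ℝ) < (N:ℝ) := by linarith
      have hcard : (u.filter (fun m => supAbs m.1 = N)).card ≤ (2 * N + 1) ^ d := by
        have step : (u.filter (fun m => supAbs m.1 = N)).card
            ≤ (Fintype.piFinset fun _ : Fin d => Finset.Icc (-(N:ℤ)) (N:ℤ)).card := by
          apply Finset.card_le_card_of_injOn (fun m => m.1)
          · intro m hm
            rw [Finset.mem_coe, Fintype.mem_piFinset]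
            intro i
            have h1 : (m.1 i).natAbs ≤ N := by
              rw [← (Finset.mem_filter.mp hm).2]
              exact le_supAbs m.1 i
            have h2 : |m.1 i| ≤ (N:ℤ) := by
              rwa [Int.abs_eq_natAbs, Int.ofNat_le]
            rw [Finset.mem_Icc]
            exact abs_le.mp h2
          · intro a _ b _ hab
            exact Subtype.ext hab
        refine step.trans ?_
        rw [Fintype.card_piFinset]
        have hIcc : (Finset.Icc (-(N:ℤ)) (N:ℤ)).card = 2 * N + 1 := by
          rw [Int.card_Icc]; omega
        simp [hIcc]
      have hsum : ∑ m ∈ u.filter (fun m => supAbs m.1 = N), (1:ℝ) / (supAbs m.1 : ℝ) ^ (d + 2)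
          = (u.filter (fun m => supAbs m.1 = N)).card * ((1:ℝ) / (N:ℝ) ^ (d + 2)) := by
        rw [Finset.sum_congr rfl (fun m hm => by rw [(Finset.mem_filter.mp hm).2]),
          Finset.sum_const, nsmul_eq_mul]
      rw [hsum]
      have h1 : ((u.filter (fun m => supAbs m.1 = N)).card : ℝ) ≤ ((2 * N + 1 : ℕ) : ℝ) ^ d := by
        exact_mod_cast hcard
      have h2 : ((2 * N + 1 : ℕ) : ℝ) ≤ 3 * (N:ℝ) := by push_cast; linarith
      have h3 : ((2 * N + 1 : ℕ) : ℝ) ^ d ≤ (3 * (N:ℝ)) ^ d :=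
        pow_le_pow_left₀ (by positivity) h2 d
      calc ((u.filter (fun m => supAbs m.1 = N)).card : ℝ) * ((1:ℝ) / (N:ℝ) ^ (d + 2))
          ≤ (3 * (N:ℝ)) ^ d * ((1:ℝ) / (N:ℝ) ^ (d + 2)) :=
            mul_le_mul_of_nonneg_right (h1.trans h3) (by positivity)
        _ = (3:ℝ) ^ d * (1 / (N:ℝ) ^ 2) := by
            rw [mul_pow, pow_add]
            field_simp
            try ring
    calc ∑ N ∈ u.image (fun m => supAbs m.1),
          ∑ m ∈ u.filter (fun m => supAbs m.1 = N), (1:ℝ) / (supAbs m.1 : ℝ) ^ (d + 2)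
        ≤ ∑ N ∈ u.image (fun m => supAbs m.1), (3:ℝ) ^ d * (1 / (N:ℝ) ^ 2) :=
          Finset.sum_le_sum inner
      _ = (3:ℝ) ^ d * ∑ N ∈ u.image (fun m => supAbs m.1), (1 / (N:ℝ) ^ 2) := by
          rw [Finset.mul_sum]
      _ ≤ (3:ℝ) ^ d * ∑' N : ℕ, 1 / (N:ℝ) ^ 2 := by
          apply mul_le_mul_of_nonneg_left _ (by positivity)
          exact Summable.sum_le_tsum _ (fun N _ => by positivity) hsum2

section coord

attribute [local instance] Matrix.frobeniusSeminormedAddCommGroup Matrix.frobeniusNormedSpace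

lemma frob_eq_norm {n T : ℕ} (X : Matrix (Fin n) (Fin T) ℂ) : frobNorm X = ‖X‖ := by
  rw [Matrix.frobenius_norm_def, frobNorm, trace_re_eq, Real.sqrt_eq_rpow]
  congr 1
  refine Finset.sum_congr rfl fun i _ => Finset.sum_congr rfl fun j _ => ?_
  rw [Real.rpow_two, Complex.sq_norm]

lemma coord_bound {n T : ℕ} (hn : 0 < n) (hT : 0 < T)
    (b : Fin (2 * n * T) → Matrix (Fin n) (Fin T) ℂ) (hb : LinearIndependent ℝ b) :
    ∃ C : ℝ, 0 < C ∧ ∀ m : Fin (2 * n * T) → ℤ,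
      (supAbs m : ℝ) ≤ C * frobNorm (∑ i, m i • b i) := by
  have hd0 : 0 < 2 * n * T := by positivity
  let φ : (Fin (2 * n * T) → ℝ) →ₗ[ℝ] Matrix (Fin n) (Fin T) ℂ :=
    { toFun := fun v => ∑ i, v i • b i
      map_add' := by intro x y; simp [add_smul, Finset.sum_add_distrib]
      map_smul' := by intro c x; simp [smul_smul, Finset.smul_sum] }
  have hφ : ∀ v, φ v = ∑ i, v i • b i := fun v => rfl
  have hφinj : Function.Injective φ := by
    intro x y hxy
    have h0 : φ (x - y) = 0 := by rw [map_sub, hxy, sub_self]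
    have h1 := Fintype.linearIndependent_iff.mp hb (x - y) (by rw [← hφ, h0])
    funext i
    have := h1 i
    simp only [Pi.sub_apply, sub_eq_zero] at this
    exact this
  let e := LinearEquiv.ofInjective φ hφinj
  letI : TopologicalSpace (Matrix (Fin n) (Fin T) ℂ) := PseudoMetricSpace.toUniformSpace.toTopologicalSpace
  haveI : T2Space ↥(LinearMap.range φ) := by
    letI : TopologicalSpace (Matrix (Fin n) (Fin T) ℂ) := instTopologicalSpaceMatrix
    exact (inferInstance : T2Space ↥(LinearMap.range φ))
  let ψ : ↥(LinearMap.range φ) →L[ℝ] (Fin (2 * n * T) → ℝ) :=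
    LinearMap.toContinuousLinearMap e.symm.toLinearMap
  refine ⟨‖ψ‖ + 1, by positivity, ?_⟩
  intro m
  set v : Fin (2 * n * T) → ℝ := fun i => (m i : ℝ) with hv
  have hmem : φ v ∈ LinearMap.range φ := ⟨v, rfl⟩
  have hsymm : e.symm ⟨φ v, hmem⟩ = v := by
    have he : e v = ⟨φ v, hmem⟩ := Subtype.ext (by simp [e])
    rw [← he, e.symm_apply_apply]
  have hb1 : ‖v‖ ≤ (‖ψ‖ + 1) * ‖φ v‖ := by
    calc ‖v‖ = ‖ψ ⟨φ v, hmem⟩‖ := by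
          rw [show ψ ⟨φ v, hmem⟩ = e.symm ⟨φ v, hmem⟩ from rfl, hsymm]
      _ ≤ ‖ψ‖ * ‖(⟨φ v, hmem⟩ : ↥(LinearMap.range φ))‖ := ψ.le_opNorm _
      _ = ‖ψ‖ * ‖φ v‖ := rfl
      _ ≤ (‖ψ‖ + 1) * ‖φ v‖ := by
          apply mul_le_mul_of_nonneg_right _ (norm_nonneg _)
          linarith
  obtain ⟨i0, _, hi0⟩ := Finset.exists_mem_eq_sup Finset.univ
    ⟨(⟨0, hd0⟩ : Fin (2 * n * T)), Finset.mem_univ _⟩ (fun i => (m i).natAbs)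
  have hsup : (supAbs m : ℝ) = |v i0| := by
    rw [supAbs, hi0, hv]
    push_cast [Nat.cast_natAbs]
    simp
  have hle : |v i0| ≤ ‖v‖ := by
    have := norm_le_pi_norm v i0
    simpa using this
  have hφv : φ v = ∑ i, m i • b i := by
    rw [hφ]
    exact Finset.sum_congr rfl fun i _ => Int.cast_smul_eq_zsmul ℝ (m i) (b i)
  rw [hsup]
  calc |v i0| ≤ ‖v‖ := hle
    _ ≤ (‖ψ‖ + 1) * ‖φ v‖ := hb1
    _ = (‖ψ‖ + 1) * frobNorm (∑ i, m i • b i) := by rw [hφv, frob_eq_norm]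

end coord

lemma summable_g0 {n T nr : ℕ} (hn : 0 < n) (hT : 0 < T) (hnr : n * T + 1 < nr)
    (b : Fin (2 * n * T) → Matrix (Fin n) (Fin T) ℂ)
    (hb : LinearIndependent ℝ b)
    (L : Set (Matrix (Fin n) (Fin T) ℂ))
    (hL : ∀ X, X ∈ L ↔ X ∈ Submodule.span ℤ (Set.range b))
    (hmin : ∀ X ∈ L, X ≠ 0 → 1 ≤ frobNorm X) :
    Summable (fun X : {X : Matrix (Fin n) (Fin T) ℂ // X ∈ L ∧ X ≠ 0} =>
      (1:ℝ) / (((X.1 * X.1ᴴ).trace).re) ^ nr) := by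
  obtain ⟨C, hC, hCb⟩ := coord_bound hn hT b hb
  have hrep : ∀ X : {X : Matrix (Fin n) (Fin T) ℂ // X ∈ L ∧ X ≠ 0},
      ∃ m : Fin (2 * n * T) → ℤ, ∑ i, m i • b i = X.1 := by
    intro X
    exact (Submodule.mem_span_range_iff_exists_fun ℤ).mp ((hL X.1).mp X.2.1)
  choose rep hrepspec using hrep
  have hrep0 : ∀ X, rep X ≠ 0 := by
    intro X h0
    apply X.2.2
    rw [← hrepspec X, h0]
    simp
  let θ : {X : Matrix (Fin n) (Fin T) ℂ // X ∈ L ∧ X ≠ 0} → {m : Fin (2 * n * T) → ℤ // m ≠ 0} :=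
    fun X => ⟨rep X, hrep0 X⟩
  have hθinj : Function.Injective θ := by
    intro X Y hXY
    have : rep X = rep Y := congrArg Subtype.val hXY
    apply Subtype.ext
    rw [← hrepspec X, ← hrepspec Y, this]
  have hsummable : Summable (fun X : {X : Matrix (Fin n) (Fin T) ℂ // X ∈ L ∧ X ≠ 0} =>
      C ^ ((2 * n * T + 2)) * ((1:ℝ) / (supAbs (rep X) : ℝ) ^ ((2 * n * T + 2)))) := by
    exact ((summable_int_vec (2 * n * T)).comp_injective hθinj).mul_left _
  apply Summable.of_nonneg_of_le _ _ hsummable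
  · intro X
    have ht := trace_re_nonneg X.1
    positivity
  · intro X
    set t := ((X.1 * X.1ᴴ).trace).re with hteq
    set f := frobNorm X.1 with hfeq
    have hf1 : 1 ≤ f := hmin X.1 X.2.1 X.2.2
    have hf0 : 0 < f := by linarith
    have htf : t = f ^ 2 := (frob_sq X.1).symm
    have hμ1 : 1 ≤ (supAbs (rep X) : ℝ) := by exact_mod_cast supAbs_pos (hrep0 X)
    have hμC : (supAbs (rep X) : ℝ) ≤ C * f := by
      have := hCb (rep X)
      rwa [hrepspec X] at this
    have hnr2 : (2 * n * T + 2) ≤ 2 * nr := by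
      calc 2 * n * T + 2 = 2 * (n * T + 1) := by ring
        _ ≤ 2 * nr := Nat.mul_le_mul_left 2 (by omega)
    have key1 : f ^ ((2 * n * T + 2)) ≤ t ^ nr := by
      rw [htf, ← pow_mul]
      exact pow_le_pow_right₀ hf1 hnr2
    have key2 : (supAbs (rep X) : ℝ) ^ ((2 * n * T + 2)) ≤ C ^ ((2 * n * T + 2)) * f ^ ((2 * n * T + 2)) := by
      rw [← mul_pow]
      exact pow_le_pow_left₀ (by linarith) hμC _
    have hμpos : (0:ℝ) < (supAbs (rep X) : ℝ) ^ ((2 * n * T + 2)) := by positivity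
    have htpos : (0:ℝ) < t ^ nr := by
      rw [htf, ← pow_mul]; positivity
    rw [mul_one_div, div_le_div_iff₀ htpos hμpos, one_mul]
    calc (supAbs (rep X) : ℝ) ^ ((2 * n * T + 2)) ≤ C ^ ((2 * n * T + 2)) * f ^ ((2 * n * T + 2)) := key2
      _ ≤ C ^ ((2 * n * T + 2)) * t ^ nr := mul_le_mul_of_nonneg_left key1 (by positivity)

theorem stmt12 (n T nr : ℕ) (hn : 0 < n) (hT : 0 < T) (hnr : n * T + 1 < nr)
    (b : Fin (2 * n * T) → Matrix (Fin n) (Fin T) ℂ)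
    (hb : LinearIndependent ℝ b)
    (L : Set (Matrix (Fin n) (Fin T) ℂ))
    (hL : ∀ X, X ∈ L ↔ X ∈ Submodule.span ℤ (Set.range b))
    (hmin : ∀ X ∈ L, X ≠ 0 → 1 ≤ frobNorm X)
    (r : ℝ) (hr0 : 0 ≤ r) (hrn : r ≤ n) :
    ∃ K : ℝ, ∀ ρ : ℝ, 1 ≤ ρ →
      ∑' X : {X : Matrix (Fin n) (Fin T) ℂ // X ∈ L ∧ X ≠ 0 ∧
          frobNorm X ≤ 2 * ρ ^ (r * T / (2 * n * T : ℝ))},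
          1 / (((1 : Matrix (Fin n) (Fin n) ℂ) +
              ((ρ ^ (1 - 2 * r * T / (2 * n * T : ℝ)) : ℝ) : ℂ) • (X.1 * X.1ᴴ)).det).re ^ nr
        ≤ K * ρ ^ (-((1 - r / n) * nr)) := by
  have hg₀ := summable_g0 hn hT hnr b hb L hL hmin
  refine ⟨∑' X : {X : Matrix (Fin n) (Fin T) ℂ // X ∈ L ∧ X ≠ 0},
    (1:ℝ) / (((X.1 * X.1ᴴ).trace).re) ^ nr, ?_⟩
  intro ρ hρ
  have hρ0 : (0:ℝ) < ρ := by linarith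
  set E : ℝ := 1 - 2 * r * T / (2 * n * T : ℝ) with hE
  set c : ℝ := ρ ^ E with hc
  have hc0 : 0 < c := Real.rpow_pos_of_pos hρ0 E
  -- the inclusion map
  let j : {X : Matrix (Fin n) (Fin T) ℂ // X ∈ L ∧ X ≠ 0 ∧
        frobNorm X ≤ 2 * ρ ^ (r * T / (2 * n * T : ℝ))} →
      {X : Matrix (Fin n) (Fin T) ℂ // X ∈ L ∧ X ≠ 0} :=
    fun X => ⟨X.1, X.2.1, X.2.2.1⟩
  have hjinj : Function.Injective j := by
    intro X Y hXY
    rw [Subtype.ext_iff] at hXY ⊢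
    exact hXY
  have hg : Summable (fun X : {X : Matrix (Fin n) (Fin T) ℂ // X ∈ L ∧ X ≠ 0 ∧
        frobNorm X ≤ 2 * ρ ^ (r * T / (2 * n * T : ℝ))} =>
      (1:ℝ) / (((X.1 * X.1ᴴ).trace).re) ^ nr) := (hg₀.comp_injective hjinj).congr (fun X => rfl)
  -- per-term facts
  have hdetpos : ∀ X : {X : Matrix (Fin n) (Fin T) ℂ // X ∈ L ∧ X ≠ 0 ∧
        frobNorm X ≤ 2 * ρ ^ (r * T / (2 * n * T : ℝ))},
      c * ((X.1 * X.1ᴴ).trace).re ≤ (((1 : Matrix (Fin n) (Fin n) ℂ) +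
          ((c : ℝ) : ℂ) • (X.1 * X.1ᴴ)).det).re
        ∧ 1 ≤ ((X.1 * X.1ᴴ).trace).re := by
    intro X
    have hf1 : 1 ≤ frobNorm X.1 := hmin X.1 X.2.1 X.2.2.1
    have ht1 : 1 ≤ ((X.1 * X.1ᴴ).trace).re := by
      rw [← frob_sq]; nlinarith
    refine ⟨?_, ht1⟩
    have := det_re_ge c hc0.le X.1
    linarith
  have hterm : ∀ X : {X : Matrix (Fin n) (Fin T) ℂ // X ∈ L ∧ X ≠ 0 ∧
        frobNorm X ≤ 2 * ρ ^ (r * T / (2 * n * T : ℝ))},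
      1 / (((1 : Matrix (Fin n) (Fin n) ℂ) +
          ((c : ℝ) : ℂ) • (X.1 * X.1ᴴ)).det).re ^ nr
        ≤ (1 / c ^ nr) * ((1:ℝ) / (((X.1 * X.1ᴴ).trace).re) ^ nr) := by
    intro X
    obtain ⟨h1, h2⟩ := hdetpos X
    set t := ((X.1 * X.1ᴴ).trace).re with hteq
    have hctpos : 0 < c * t := by nlinarith
    have hdpos : 0 < (((1 : Matrix (Fin n) (Fin n) ℂ) +
        ((c : ℝ) : ℂ) • (X.1 * X.1ᴴ)).det).re := lt_of_lt_of_le hctpos h1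
    have hp : (c * t) ^ nr ≤ (((1 : Matrix (Fin n) (Fin n) ℂ) +
        ((c : ℝ) : ℂ) • (X.1 * X.1ᴴ)).det).re ^ nr := pow_le_pow_left₀ hctpos.le h1 nr
    calc 1 / (((1 : Matrix (Fin n) (Fin n) ℂ) +
          ((c : ℝ) : ℂ) • (X.1 * X.1ᴴ)).det).re ^ nr
        ≤ 1 / (c * t) ^ nr := one_div_le_one_div_of_le (by positivity) hp
      _ = (1 / c ^ nr) * ((1:ℝ) / t ^ nr) := by
          rw [one_div_mul_one_div, ← mul_pow]
  have hterm_nonneg : ∀ X : {X : Matrix (Fin n) (Fin T) ℂ // X ∈ L ∧ X ≠ 0 ∧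
        frobNorm X ≤ 2 * ρ ^ (r * T / (2 * n * T : ℝ))},
      0 ≤ 1 / (((1 : Matrix (Fin n) (Fin n) ℂ) +
          ((c : ℝ) : ℂ) • (X.1 * X.1ᴴ)).det).re ^ nr := by
    intro X
    obtain ⟨h1, h2⟩ := hdetpos X
    have : (0:ℝ) ≤ (((1 : Matrix (Fin n) (Fin n) ℂ) +
        ((c : ℝ) : ℂ) • (X.1 * X.1ᴴ)).det).re := by nlinarith
    positivity
  have hsumterm : Summable (fun X : {X : Matrix (Fin n) (Fin T) ℂ // X ∈ L ∧ X ≠ 0 ∧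
        frobNorm X ≤ 2 * ρ ^ (r * T / (2 * n * T : ℝ))} =>
      1 / (((1 : Matrix (Fin n) (Fin n) ℂ) +
          ((c : ℝ) : ℂ) • (X.1 * X.1ᴴ)).det).re ^ nr) :=
    Summable.of_nonneg_of_le hterm_nonneg hterm (hg.mul_left _)
  have hfinal : (1 / c ^ nr : ℝ) = ρ ^ (-((1 - r / n) * nr)) := by
    have hn0 : (n:ℝ) ≠ 0 := by positivity
    have hden : (2 * n * T : ℝ) ≠ 0 := by positivity
    have h1 : 2 * r * T / (2 * n * T : ℝ) = r / n := by
      rw [div_eq_div_iff hden hn0]; ring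
    have hcpow : c ^ nr = ρ ^ (E * nr) := by
      rw [hc, ← Real.rpow_natCast (ρ ^ E) nr, ← Real.rpow_mul hρ0.le]
    rw [hcpow, one_div, ← Real.rpow_neg hρ0.le]
    congr 1
    rw [hE, h1]
  calc ∑' X : {X : Matrix (Fin n) (Fin T) ℂ // X ∈ L ∧ X ≠ 0 ∧
          frobNorm X ≤ 2 * ρ ^ (r * T / (2 * n * T : ℝ))},
        1 / (((1 : Matrix (Fin n) (Fin n) ℂ) +
            ((c : ℝ) : ℂ) • (X.1 * X.1ᴴ)).det).re ^ nr
      ≤ ∑' X : {X : Matrix (Fin n) (Fin T) ℂ // X ∈ L ∧ X ≠ 0 ∧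
          frobNorm X ≤ 2 * ρ ^ (r * T / (2 * n * T : ℝ))},
        (1 / c ^ nr) * ((1:ℝ) / (((X.1 * X.1ᴴ).trace).re) ^ nr) :=
        Summable.tsum_le_tsum hterm hsumterm (hg.mul_left _)
    _ = (1 / c ^ nr) * ∑' X : {X : Matrix (Fin n) (Fin T) ℂ // X ∈ L ∧ X ≠ 0 ∧
          frobNorm X ≤ 2 * ρ ^ (r * T / (2 * n * T : ℝ))},
        ((1:ℝ) / (((X.1 * X.1ᴴ).trace).re) ^ nr) := tsum_mul_left
    _ ≤ (1 / c ^ nr) * ∑' X : {X : Matrix (Fin n) (Fin T) ℂ // X ∈ L ∧ X ≠ 0},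
        ((1:ℝ) / (((X.1 * X.1ᴴ).trace).re) ^ nr) := by
        apply mul_le_mul_of_nonneg_left _ (by positivity)
        exact Summable.tsum_le_tsum_of_inj j hjinj
          (fun Y _ => div_nonneg zero_le_one (pow_nonneg (trace_re_nonneg Y.1) nr))
          (fun X => le_rfl) hg hg₀
    _ = (∑' X : {X : Matrix (Fin n) (Fin T) ℂ // X ∈ L ∧ X ≠ 0},
        ((1:ℝ) / (((X.1 * X.1ᴴ).trace).re) ^ nr)) * ρ ^ (-((1 - r / n) * nr)) := by
        rw [mul_comm, hfinal]
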